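/- Let α⁰, β⁰, α¹, β¹ ∈ ℂ and define J⁰, J¹ : U → ℂ on the open set U = {(w₁, w₂, v₁, v₂) ∈ ℂ⁴ : w₁ w₂ ≠ 0} by J⁰(w₁, w₂, v₁, v₂) := w₁ + w₂ + α⁰ (1/w₁ + 1/w₂) + β⁰/(w₁ w₂) and J¹(w₁, w₂, v₁, v₂) := (1 − α⁰/w₁² − β⁰/(w₁² w₂)) v₁ + (1 − α⁰/w₂² − β⁰/(w₁ w₂²)) v₂ + α¹ (1/w₁ + 1/w₂) + β¹/(w₁ w₂). For ζ ∈ ℂ define the Poisson bracket of differentiable functions f, g on U by {f, g} := w₁ w₂ (∂f/∂w₂ · ∂g/∂v₁ − ∂f/∂v₁ · ∂g/∂w₂) − w₁ w₂ (∂f/∂w₁ · ∂g/∂v₂ − ∂f/∂v₂ · ∂g/∂w₁) + (ζ w₁ w₂ − w₁ v₂ − w₂ v₁)(∂f/∂v₁ · ∂g/∂v₂ − ∂f/∂v₂ · ∂g/∂v₁). Then the even and odd components of the first integral are in involution with respect to the whole pencil of brackets: {J⁰, J¹}(p) = 0 for every p ∈ U and every ζ ∈ ℂ. -/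

import Mathlib

/-- The even part `J⁰` of the dual first integral, as a function of
`p = (w₁, w₂, v₁, v₂) : Fin 4 → ℂ` (with `p 0 = w₁`, `p 1 = w₂`,
`p 2 = v₁`, `p 3 = v₂`). -/
noncomputable def J0 (α₀ β₀ : ℂ) (p : Fin 4 → ℂ) : ℂ :=
  p 0 + p 1 + α₀ * (1 / p 0 + 1 / p 1) + β₀ / (p 0 * p 1)

/-- The odd part `J¹` of the dual first integral. -/
noncomputable def J1 (α₀ β₀ α₁ β₁ : ℂ) (p : Fin 4 → ℂ) : ℂ :=
  (1 - α₀ / p 0 ^ 2 - β₀ / (p 0 ^ 2 * p 1)) * p 2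
    + (1 - α₀ / p 1 ^ 2 - β₀ / (p 0 * p 1 ^ 2)) * p 3
    + α₁ * (1 / p 0 + 1 / p 1) + β₁ / (p 0 * p 1)

/-- The partial (complex Fréchet) derivative of `f : (Fin 4 → ℂ) → ℂ` in the
`i`-th coordinate direction at the point `p`. -/
noncomputable def pderivAt (i : Fin 4) (f : (Fin 4 → ℂ) → ℂ) (p : Fin 4 → ℂ) : ℂ :=
  fderiv ℂ f p (Pi.single i 1)

/-- The Poisson pencil with parameter `ζ`, defined on coordinates by
`{w₁,w₂} = {w₁,v₁} = {w₂,v₂} = 0`, `{w₂,v₁} = -{w₁,v₂} = w₁w₂`,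
`{v₁,v₂} = ζ w₁w₂ - w₁v₂ - w₂v₁`, applied to differentiable functions `f, g`
at the point `p` (coordinates `w₁ = p 0`, `w₂ = p 1`, `v₁ = p 2`, `v₂ = p 3`). -/
noncomputable def poissonPencil (ζ : ℂ) (f g : (Fin 4 → ℂ) → ℂ) (p : Fin 4 → ℂ) : ℂ :=
  p 0 * p 1 * (pderivAt 1 f p * pderivAt 2 g p - pderivAt 2 f p * pderivAt 1 g p)
    - p 0 * p 1 * (pderivAt 0 f p * pderivAt 3 g p - pderivAt 3 f p * pderivAt 0 g p)
    + (ζ * (p 0 * p 1) - p 0 * p 3 - p 1 * p 2) *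
        (pderivAt 2 f p * pderivAt 3 g p - pderivAt 3 f p * pderivAt 2 g p)

/-- The even and odd parts `J⁰, J¹` of the dual first integral of the dual QRT
map are in involution with respect to the whole Poisson pencil: for every
`ζ ∈ ℂ` and every point of `U = {w₁ w₂ ≠ 0}`, `{J⁰, J¹} = 0`. -/
private lemma hasFDerivAt_inv_comp {f : (Fin 4 → ℂ) → ℂ} {f' : (Fin 4 → ℂ) →L[ℂ] ℂ}
    {p : Fin 4 → ℂ} (hf : HasFDerivAt f f' p) (h : f p ≠ 0) :
    HasFDerivAt (fun q => (f q)⁻¹)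
      ((-(ContinuousLinearMap.mulLeftRight ℂ ℂ (f p)⁻¹ (f p)⁻¹)).comp f') p := by
  exact (hasFDerivAt_inv' h).comp p hf

set_option maxHeartbeats 1000000 in
theorem dual_qrt_J0_J1_in_involution (α₀ β₀ α₁ β₁ : ℂ) (ζ : ℂ)
    (p : Fin 4 → ℂ) (hp : p 0 * p 1 ≠ 0) :
    poissonPencil ζ (J0 α₀ β₀) (J1 α₀ β₀ α₁ β₁) p = 0 := by
  have ha : p 0 ≠ 0 := left_ne_zero_of_mul hp
  have hb : p 1 ≠ 0 := right_ne_zero_of_mul hp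
  have h0 : HasFDerivAt (fun q : Fin 4 → ℂ => q 0)
      (ContinuousLinearMap.proj 0 : (Fin 4 → ℂ) →L[ℂ] ℂ) p := by
    exact (ContinuousLinearMap.proj 0 : (Fin 4 → ℂ) →L[ℂ] ℂ).hasFDerivAt
  have h1 : HasFDerivAt (fun q : Fin 4 → ℂ => q 1)
      (ContinuousLinearMap.proj 1 : (Fin 4 → ℂ) →L[ℂ] ℂ) p := by
    exact (ContinuousLinearMap.proj 1 : (Fin 4 → ℂ) →L[ℂ] ℂ).hasFDerivAt
  have h2 : HasFDerivAt (fun q : Fin 4 → ℂ => q 2)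
      (ContinuousLinearMap.proj 2 : (Fin 4 → ℂ) →L[ℂ] ℂ) p := by
    exact (ContinuousLinearMap.proj 2 : (Fin 4 → ℂ) →L[ℂ] ℂ).hasFDerivAt
  have h3 : HasFDerivAt (fun q : Fin 4 → ℂ => q 3)
      (ContinuousLinearMap.proj 3 : (Fin 4 → ℂ) →L[ℂ] ℂ) p := by
    exact (ContinuousLinearMap.proj 3 : (Fin 4 → ℂ) →L[ℂ] ℂ).hasFDerivAt
  have e0 : J0 α₀ β₀ = fun q : Fin 4 → ℂ =>
      q 0 + q 1 + α₀ * ((q 0)⁻¹ + (q 1)⁻¹) + β₀ * (q 0 * q 1)⁻¹ := by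
    funext q; simp [J0, one_div, div_eq_mul_inv]
  have e1 : J1 α₀ β₀ α₁ β₁ = fun q : Fin 4 → ℂ =>
      (1 - α₀ * (q 0 * q 0)⁻¹ - β₀ * (q 0 * q 0 * q 1)⁻¹) * q 2
      + (1 - α₀ * (q 1 * q 1)⁻¹ - β₀ * (q 0 * (q 1 * q 1))⁻¹) * q 3
      + α₁ * ((q 0)⁻¹ + (q 1)⁻¹) + β₁ * (q 0 * q 1)⁻¹ := by
    funext q; simp [J1, one_div, div_eq_mul_inv, sq]
  have hJ0 : HasFDerivAt (fun q : Fin 4 → ℂ =>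
      q 0 + q 1 + α₀ * ((q 0)⁻¹ + (q 1)⁻¹) + β₀ * (q 0 * q 1)⁻¹) _ p := ((h0.add h1).add
      (((hasFDerivAt_inv_comp h0 ha).add (hasFDerivAt_inv_comp h1 hb)).const_mul α₀)).add
      ((hasFDerivAt_inv_comp (h0.mul h1) hp).const_mul β₀)
  have haa : p 0 * p 0 ≠ 0 := mul_ne_zero ha ha
  have hbb : p 1 * p 1 ≠ 0 := mul_ne_zero hb hb
  have hA := ((hasFDerivAt_const (1:ℂ) p).sub
      ((hasFDerivAt_inv_comp (h0.mul h0) haa).const_mul α₀)).sub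
      ((hasFDerivAt_inv_comp ((h0.mul h0).mul h1) (mul_ne_zero haa hb)).const_mul β₀)
  have hB := ((hasFDerivAt_const (1:ℂ) p).sub
      ((hasFDerivAt_inv_comp (h1.mul h1) hbb).const_mul α₀)).sub
      ((hasFDerivAt_inv_comp (h0.mul (h1.mul h1)) (mul_ne_zero ha hbb)).const_mul β₀)
  have hJ1 : HasFDerivAt (fun q : Fin 4 → ℂ =>
      (1 - α₀ * (q 0 * q 0)⁻¹ - β₀ * (q 0 * q 0 * q 1)⁻¹) * q 2
      + (1 - α₀ * (q 1 * q 1)⁻¹ - β₀ * (q 0 * (q 1 * q 1))⁻¹) * q 3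
      + α₁ * ((q 0)⁻¹ + (q 1)⁻¹) + β₁ * (q 0 * q 1)⁻¹) _ p := (((hA.mul h2).add (hB.mul h3)).add
      (((hasFDerivAt_inv_comp h0 ha).add (hasFDerivAt_inv_comp h1 hb)).const_mul α₁)).add
      ((hasFDerivAt_inv_comp (h0.mul h1) hp).const_mul β₁)
  have d00 : pderivAt 0 (J0 α₀ β₀) p
      = 1 - α₀ * (p 0 * p 0)⁻¹ - β₀ * (p 0 * p 0 * p 1)⁻¹ := by
    rw [pderivAt, e0, hJ0.fderiv]
    simp only [ContinuousLinearMap.add_apply, ContinuousLinearMap.sub_apply,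
      ContinuousLinearMap.coe_smul', Pi.smul_apply, ContinuousLinearMap.comp_apply,
      ContinuousLinearMap.neg_apply, ContinuousLinearMap.mulLeftRight_apply,
      ContinuousLinearMap.proj_apply, ContinuousLinearMap.smul_apply,
      ContinuousLinearMap.zero_apply, Pi.single_apply, smul_eq_mul]
    simp
    field_simp
    ring
  have d01 : pderivAt 1 (J0 α₀ β₀) p
      = 1 - α₀ * (p 1 * p 1)⁻¹ - β₀ * (p 0 * (p 1 * p 1))⁻¹ := by
    rw [pderivAt, e0, hJ0.fderiv]
    simp only [ContinuousLinearMap.add_apply, ContinuousLinearMap.sub_apply,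
      ContinuousLinearMap.coe_smul', Pi.smul_apply, ContinuousLinearMap.comp_apply,
      ContinuousLinearMap.neg_apply, ContinuousLinearMap.mulLeftRight_apply,
      ContinuousLinearMap.proj_apply, ContinuousLinearMap.smul_apply,
      ContinuousLinearMap.zero_apply, Pi.single_apply, smul_eq_mul]
    simp
    field_simp
    ring
  have d02 : pderivAt 2 (J0 α₀ β₀) p = 0 := by
    rw [pderivAt, e0, hJ0.fderiv]
    simp only [ContinuousLinearMap.add_apply, ContinuousLinearMap.sub_apply,
      ContinuousLinearMap.coe_smul', Pi.smul_apply, ContinuousLinearMap.comp_apply,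
      ContinuousLinearMap.neg_apply, ContinuousLinearMap.mulLeftRight_apply,
      ContinuousLinearMap.proj_apply, ContinuousLinearMap.smul_apply,
      ContinuousLinearMap.zero_apply, Pi.single_apply, smul_eq_mul]
    simp
  have d03 : pderivAt 3 (J0 α₀ β₀) p = 0 := by
    rw [pderivAt, e0, hJ0.fderiv]
    simp only [ContinuousLinearMap.add_apply, ContinuousLinearMap.sub_apply,
      ContinuousLinearMap.coe_smul', Pi.smul_apply, ContinuousLinearMap.comp_apply,
      ContinuousLinearMap.neg_apply, ContinuousLinearMap.mulLeftRight_apply,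
      ContinuousLinearMap.proj_apply, ContinuousLinearMap.smul_apply,
      ContinuousLinearMap.zero_apply, Pi.single_apply, smul_eq_mul]
    simp
  have d12 : pderivAt 2 (J1 α₀ β₀ α₁ β₁) p
      = 1 - α₀ * (p 0 * p 0)⁻¹ - β₀ * (p 0 * p 0 * p 1)⁻¹ := by
    rw [pderivAt, e1, hJ1.fderiv]
    simp only [ContinuousLinearMap.add_apply, ContinuousLinearMap.sub_apply,
      ContinuousLinearMap.coe_smul', Pi.smul_apply, ContinuousLinearMap.comp_apply,
      ContinuousLinearMap.neg_apply, ContinuousLinearMap.mulLeftRight_apply,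
      ContinuousLinearMap.proj_apply, ContinuousLinearMap.smul_apply,
      ContinuousLinearMap.zero_apply, Pi.single_apply, smul_eq_mul]
    simp
  have d13 : pderivAt 3 (J1 α₀ β₀ α₁ β₁) p
      = 1 - α₀ * (p 1 * p 1)⁻¹ - β₀ * (p 0 * (p 1 * p 1))⁻¹ := by
    rw [pderivAt, e1, hJ1.fderiv]
    simp only [ContinuousLinearMap.add_apply, ContinuousLinearMap.sub_apply,
      ContinuousLinearMap.coe_smul', Pi.smul_apply, ContinuousLinearMap.comp_apply,
      ContinuousLinearMap.neg_apply, ContinuousLinearMap.mulLeftRight_apply,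
      ContinuousLinearMap.proj_apply, ContinuousLinearMap.smul_apply,
      ContinuousLinearMap.zero_apply, Pi.single_apply, smul_eq_mul]
    simp
  rw [poissonPencil, d00, d01, d02, d03, d12, d13]
  ring
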